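/- Every connected part arising in a game of clobber started from an even-length alternating path is, up to color negation, of the form: an optional single leading o, followed by an alternating string beginning with o, optionally followed by one extra stone of the same color as the last stone of the alternating string. Moreover this family of strings is closed under clobber moves: any move on such a part splits it into at most two parts of the same form. -/

import Mathlib

universe u

namespace SetTheory

/-- Pre-game, as in the older Mathlib (`SetTheory.PGame`), removed from current Mathlib. -/
inductive PGame : Type (u + 1)
  | mk : ∀ α β : Type u, (α → PGame) → (β → PGame) → PGame

namespace PGame

/-- The pre-game with no moves, as in the older Mathlib. -/
instance : Zero PGame :=
  ⟨⟨PEmpty, PEmpty, PEmpty.elim, PEmpty.elim⟩⟩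

/-- The pre-game with given lists of left and right options, as in the older Mathlib. -/
def ofLists (L R : List PGame.{u}) : PGame.{u} :=
  mk (ULift (Fin L.length)) (ULift (Fin R.length)) (fun i => L[i.down.1]) fun j => R[j.down.1]

end PGame

end SetTheory

open SetTheory PGame

inductive Cell | x | o | e
deriving DecidableEq

abbrev Pos := List Cell

/-- All positions reachable by one move of the player with stones `me`
clobbering an adjacent stone of the opponent `opp`. -/
def movesAux (me opp : Cell) : Pos → List Pos
  | a :: b :: rest =>
      (if a = me ∧ b = opp then [Cell.e :: me :: rest] else []) ++
      (if a = opp ∧ b = me then [me :: Cell.e :: rest] else []) ++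
      (movesAux me opp (b :: rest)).map (a :: ·)
  | _ => []

def leftMoves (p : Pos) : List Pos := movesAux Cell.x Cell.o p
def rightMoves (p : Pos) : List Pos := movesAux Cell.o Cell.x p

def stones (p : Pos) : Nat := p.countP (· != Cell.e)

/-- Game value of a clobber position, via fuel recursion (each move removes one stone). -/
def valueFuel : Nat → Pos → PGame
  | 0, _ => 0
  | n+1, p => PGame.ofLists ((leftMoves p).map (valueFuel n)) ((rightMoves p).map (valueFuel n))

def value (p : Pos) : PGame := valueFuel (stones p) p

/-- Swap the color of a cell. -/
def swapCell : Cell → Cell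
  | Cell.x => Cell.o
  | Cell.o => Cell.x
  | Cell.e => Cell.e

/-- The maximal contiguous nonempty segments (parts) of a position. -/
def parts (p : Pos) : List Pos := (p.splitOn Cell.e).filter (· ≠ [])

/-- The alternating string of length `n` starting with `o`. -/
def altStr (n : Nat) : Pos :=
  (List.range n).map (fun i => if i % 2 = 0 then Cell.o else Cell.x)

/-- The last character of the alternating string of length `n`. -/
def lastChar (n : Nat) : Cell := if (n - 1) % 2 = 0 then Cell.o else Cell.x

/-- A string of the form `[o]a[c]`: an optional leading `o`, a nonempty alternating
string `a` starting with `o`, and optionally an extra stone `c` matching the final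
stone of `a`. -/
def InU0 (w : Pos) : Prop :=
  ∃ n ≥ 1, ∃ lead tail : Bool,
    w = (if lead then [Cell.o] else []) ++ altStr n ++ (if tail then [lastChar n] else [])

/-- The family `U`: strings that, up to color negation, have the form `[o]a[c]`. -/
def InU (w : Pos) : Prop := InU0 w ∨ InU0 (w.map swapCell)

/-- One legal clobber move (by either player). -/
def Step (p q : Pos) : Prop := q ∈ leftMoves p ∨ q ∈ rightMoves p

/-- Positions reachable by a sequence of legal moves. -/
def Reachable (p q : Pos) : Prop := Relation.ReflTransGen Step p q

/-- The alternating position `(ox)^n`. -/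
def altOX : Nat → Pos
  | 0 => []
  | n+1 => Cell.o :: Cell.x :: altOX n

section Aux

/-- Alternation-continuation check: `l` continues alternating after seed `c`,
except the final character is only required to be a stone. -/
def okFrom : Cell → Pos → Prop
  | _, [] => True
  | c, d :: rest => (if rest = [] then d ≠ Cell.e else d = swapCell c) ∧ okFrom d rest

/-- Recursive characterization of the family `U`. -/
def nice : Pos → Prop
  | [] => False
  | a :: l => a ≠ Cell.e ∧ ((l.head? = some a ∧ okFrom a l.tail) ∨ okFrom a l)

lemma swap_swap (c : Cell) : swapCell (swapCell c) = c := by cases c <;> rfl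

lemma swap_ne_e {c : Cell} (h : c ≠ Cell.e) : swapCell c ≠ Cell.e := by
  cases c <;> simp_all [swapCell]

lemma map_swap_map_swap (l : Pos) : (l.map swapCell).map swapCell = l := by
  simp [List.map_map, Function.comp_def, swap_swap]

lemma okFrom_map_swap : ∀ (l : Pos) (c : Cell), okFrom c l → okFrom (swapCell c) (l.map swapCell)
  | [], _, _ => trivial
  | d :: rest, c, h => by
    obtain ⟨h1, h2⟩ := h
    refine ⟨?_, okFrom_map_swap rest d h2⟩
    rcases rest with _ | ⟨d', rest'⟩
    · simpa using swap_ne_e (by simpa using h1)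
    · rw [if_neg (by simp)] at h1
      rw [if_neg (by simp), h1]

lemma okFrom_prefix : ∀ (l : Pos) {l' : Pos} {c : Cell}, c ≠ Cell.e → okFrom c (l ++ l') → okFrom c l
  | [], _, _, _, _ => trivial
  | d :: t, l', c, hc, h => by
    obtain ⟨h1, h2⟩ := h
    simp only [List.append_eq] at h1 h2
    have hd : d ≠ Cell.e := by
      by_cases ht : t ++ l' = []
      · simpa [ht] using h1
      · rw [if_neg ht] at h1; exact h1 ▸ swap_ne_e hc
    refine ⟨?_, okFrom_prefix t hd h2⟩
    by_cases ht : t = []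
    · simp [ht, hd]
    · rw [if_neg ht]
      rw [if_neg (by simp [ht])] at h1
      exact h1

lemma okFrom_ne_e : ∀ (l : Pos) {c : Cell}, c ≠ Cell.e → okFrom c l → ∀ d ∈ l, d ≠ Cell.e
  | [], _, _, _, _, h => by simp at h
  | d :: t, c, hc, ⟨h1, h2⟩, d', hd' => by
    have hd : d ≠ Cell.e := by
      by_cases ht : t = []
      · simpa [ht] using h1
      · rw [if_neg ht] at h1; exact h1 ▸ swap_ne_e hc
    rcases List.mem_cons.1 hd' with rfl | hmem
    · exact hd
    · exact okFrom_ne_e t hd h2 d' hmem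

lemma nice_cons {c : Cell} {m : Pos} (hc : c ≠ Cell.e) (h : okFrom c m) : nice (c :: m) :=
  ⟨hc, Or.inr h⟩

lemma nice_cons2 {c : Cell} {m : Pos} (hc : c ≠ Cell.e) (h : okFrom c m) : nice (c :: c :: m) :=
  ⟨hc, Or.inl ⟨rfl, h⟩⟩

lemma nice_of_okFrom : ∀ {c : Cell} {m : Pos}, c ≠ Cell.e → okFrom c m → m ≠ [] → nice m
  | c, [], _, _, hm => absurd rfl hm
  | c, d :: m', hc, ⟨h1, h2⟩, _ => by
    have hd : d ≠ Cell.e := by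
      by_cases hm' : m' = []
      · simpa [hm'] using h1
      · rw [if_neg hm'] at h1; exact h1 ▸ swap_ne_e hc
    exact nice_cons hd h2

lemma nice_cons_swap {a : Cell} {m : Pos} (ha : a ≠ Cell.e) (h : okFrom (swapCell a) m) :
    nice (a :: m) := by
  rcases m with _ | ⟨d, rest⟩
  · exact ⟨ha, Or.inr trivial⟩
  · obtain ⟨h1, h2⟩ := h
    rcases rest with _ | ⟨d', rest'⟩
    · exact nice_cons ha ⟨by simpa using h1, trivial⟩
    · rw [if_neg (by simp)] at h1
      subst h1
      rw [swap_swap] at h2 ⊢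
      exact nice_cons2 ha h2

lemma okFrom_head {a b : Cell} {v : Pos} (h : okFrom a (b :: v)) (hab : a ≠ b)
    (ha : a ≠ Cell.e) : b ≠ Cell.e ∧ nice (a :: v) ∧ (v ≠ [] → nice v) := by
  obtain ⟨h1, h2⟩ := h
  rcases v with _ | ⟨d, v'⟩
  · exact ⟨by simpa using h1, ⟨ha, Or.inr trivial⟩, by simp⟩
  · rw [if_neg (by simp)] at h1
    have hb : b ≠ Cell.e := h1 ▸ swap_ne_e ha
    refine ⟨hb, nice_cons_swap ha (h1 ▸ h2), fun _ => nice_of_okFrom hb h2 (by simp)⟩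

lemma okFrom_main {a b : Cell} {m : Pos} (hab : a ≠ b) :
    ∀ (l : Pos) {c : Cell}, c ≠ Cell.e → okFrom c (l ++ a :: b :: m) →
      okFrom c (l ++ [b]) ∧ nice (a :: m) ∧ (m ≠ [] → nice m)
  | [], c, hc, h => by
    obtain ⟨h1, h2⟩ := h
    rw [if_neg (by simp)] at h1
    have ha : a ≠ Cell.e := h1 ▸ swap_ne_e hc
    obtain ⟨hb, hn1, hn2⟩ := okFrom_head h2 hab ha
    exact ⟨⟨by simpa using hb, trivial⟩, hn1, hn2⟩
  | p :: l', c, hc, h => by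
    obtain ⟨h1, h2⟩ := h
    rw [if_neg (by simp)] at h1
    have hp : p ≠ Cell.e := h1 ▸ swap_ne_e hc
    obtain ⟨ho, hn1, hn2⟩ := okFrom_main hab l' hp h2
    exact ⟨⟨by rw [if_neg (by simp)]; exact h1, ho⟩, hn1, hn2⟩

lemma nice_closure {u v : Pos} {a b : Cell} (h : nice (u ++ a :: b :: v)) (hab : a ≠ b) :
    (u ≠ [] → nice u) ∧ nice (u ++ [b]) ∧ nice (a :: v) ∧ (v ≠ [] → nice v) := by
  rcases u with _ | ⟨p, u'⟩
  · obtain ⟨ha, hd⟩ := h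
    rcases hd with ⟨hh, _⟩ | hok
    · have hba : b = a := by simpa using hh
      exact absurd hba.symm hab
    · obtain ⟨hb, hn1, hn2⟩ := okFrom_head hok hab ha
      exact ⟨by simp, ⟨hb, Or.inr trivial⟩, hn1, hn2⟩
  · simp only [List.cons_append] at h
    obtain ⟨hp, hd⟩ := h
    rcases u' with _ | ⟨q, u''⟩
    · -- u = [p]
      rcases hd with ⟨hh, hok⟩ | hok
      · -- p = a, okFrom p (b :: v)
        simp only [List.nil_append, List.head?_cons, Option.some.injEq] at hh
        subst hh
        simp only [List.nil_append, List.tail_cons] at hok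
        obtain ⟨hb, hn1, hn2⟩ := okFrom_head hok hab hp
        exact ⟨fun _ => ⟨hp, Or.inr trivial⟩, ⟨hp, Or.inr ⟨by simpa using hb, trivial⟩⟩, hn1, hn2⟩
      · simp only [List.nil_append] at hok
        obtain ⟨ho, hn1, hn2⟩ := okFrom_main hab [] hp hok
        refine ⟨fun _ => ⟨hp, Or.inr trivial⟩, nice_cons hp (by simpa using ho), hn1, hn2⟩
    · -- u = p :: q :: u''
      rcases hd with ⟨hh, hok⟩ | hok
      · simp only [List.cons_append, List.head?_cons, Option.some.injEq] at hh
        subst hh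
        simp only [List.cons_append, List.tail_cons] at hok
        obtain ⟨ho, hn1, hn2⟩ := okFrom_main hab u'' hp hok
        exact ⟨fun _ => nice_cons2 hp (okFrom_prefix u'' hp hok), nice_cons2 hp ho, hn1, hn2⟩
      · simp only [List.cons_append] at hok
        obtain ⟨ho, hn1, hn2⟩ := okFrom_main hab (q :: u'') hp hok
        refine ⟨fun _ => nice_cons hp (okFrom_prefix (q :: u'') hp hok), nice_cons hp ho, hn1, hn2⟩

lemma altStr_succ (n : Nat) : altStr (n+1) = Cell.o :: (altStr n).map swapCell := by
  simp only [altStr, List.range_succ_eq_map, List.map_cons, List.map_map]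
  refine congrArg₂ List.cons (by norm_num) ?_
  apply List.map_congr_left
  intro i _
  rcases Nat.mod_two_eq_zero_or_one i with h | h
  · have h' : (i + 1) % 2 = 1 := by omega
    simp [Function.comp, h, h', swapCell]
  · have h' : (i + 1) % 2 = 0 := by omega
    simp [Function.comp, h, h', swapCell]

lemma altStr_ne_e : ∀ d ∈ altStr n, d ≠ Cell.e := by
  intro d hd
  simp only [altStr, List.mem_map] at hd
  obtain ⟨i, _, rfl⟩ := hd
  split <;> simp

lemma okFrom_x_altStr : ∀ n, okFrom Cell.x (altStr n)
  | 0 => trivial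
  | n+1 => by
    rw [altStr_succ]
    refine ⟨?_, ?_⟩
    · split <;> simp [swapCell]
    · have := okFrom_map_swap _ _ (okFrom_x_altStr n)
      simpa [swapCell] using this

lemma lastChar_succ (n : Nat) (hn : 1 ≤ n) : lastChar (n+1) = swapCell (lastChar n) := by
  rcases Nat.mod_two_eq_zero_or_one (n-1) with h | h
  · have h' : n % 2 = 1 := by omega
    simp [lastChar, h, h', swapCell]
  · have h' : n % 2 = 0 := by omega
    simp [lastChar, h, h', swapCell]

lemma okFrom_x_altStr_tail : ∀ n, 1 ≤ n → okFrom Cell.x (altStr n ++ [lastChar n])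
  | 1, _ => by
    simp only [altStr, lastChar]
    exact ⟨by simp [swapCell], by simp, trivial⟩
  | n+2, _ => by
    rw [altStr_succ, lastChar_succ _ (by omega)]
    refine ⟨by rw [if_neg (by simp)]; simp [swapCell], ?_⟩
    have h1 := okFrom_x_altStr_tail (n+1) (by omega)
    have := okFrom_map_swap _ _ h1
    simpa [swapCell] using this

lemma InU0_nice {w : Pos} (h : InU0 w) : nice w := by
  obtain ⟨n, hn, lead, tl, rfl⟩ := h
  obtain ⟨m, rfl⟩ : ∃ m, n = m + 1 := ⟨n-1, by omega⟩
  have hok : okFrom Cell.x (altStr (m+1) ++ (if tl then [lastChar (m+1)] else [])) := by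
    cases tl
    · simpa using okFrom_x_altStr (m+1)
    · simpa using okFrom_x_altStr_tail (m+1) (by omega)
  rw [altStr_succ] at hok ⊢
  have hok2 : okFrom Cell.o ((altStr m).map swapCell ++ (if tl then [lastChar (m+1)] else [])) := by
    simpa [swapCell] using hok.2
  cases lead
  · simpa using nice_cons (by simp) hok2
  · simpa using nice_cons2 (c := Cell.o) (by simp) hok2

lemma nice_map_swap {l : Pos} (h : nice l) : nice (l.map swapCell) := by
  rcases l with _ | ⟨a, t⟩
  · exact h.elim
  · obtain ⟨ha, hd⟩ := h
    refine ⟨swap_ne_e ha, ?_⟩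
    rcases t with _ | ⟨b, t'⟩
    · exact Or.inr trivial
    · rcases hd with ⟨hh, hok⟩ | hok
      · have hba : b = a := by simpa using hh
        subst hba
        simp only [List.tail_cons] at hok
        exact Or.inl ⟨by simp, okFrom_map_swap _ _ hok⟩
      · exact Or.inr (okFrom_map_swap _ _ hok)

lemma InU_nice {w : Pos} (h : InU w) : nice w := by
  rcases h with h | h
  · exact InU0_nice h
  · have := nice_map_swap (InU0_nice h)
    rwa [map_swap_map_swap] at this

/-- The alternating string of length `k` starting with `c`. -/
def altF (c : Cell) (k : Nat) : Pos :=
  if c = Cell.o then altStr k else (altStr k).map swapCell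

/-- The character preceding position `k` in an alternation seeded by `c`. -/
def prevL (c : Cell) (k : Nat) : Cell := if k % 2 = 0 then c else swapCell c

lemma altF_zero (c : Cell) : altF c 0 = [] := by simp [altF, altStr]

lemma altF_succ {c : Cell} (hc : c ≠ Cell.e) (k : Nat) :
    altF c (k+1) = c :: altF (swapCell c) k := by
  cases c
  case x =>
    rw [show altF Cell.x (k+1) = (altStr (k+1)).map swapCell from if_neg (by simp),
        show altF (swapCell Cell.x) k = altStr k from if_pos rfl,
        altStr_succ, List.map_cons, map_swap_map_swap]
    rfl
  case o =>
    rw [show altF Cell.o (k+1) = altStr (k+1) from if_pos rfl,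
        show altF (swapCell Cell.o) k = (altStr k).map swapCell from if_neg (by simp [swapCell]),
        altStr_succ]
  case e => exact absurd rfl hc

lemma prevL_swap {c : Cell} (k : Nat) : prevL (swapCell c) k = prevL c (k+1) := by
  rcases Nat.mod_two_eq_zero_or_one k with h | h
  · have h' : (k+1) % 2 = 1 := by omega
    simp [prevL, h, h']
  · have h' : (k+1) % 2 = 0 := by omega
    simp [prevL, h, h', swap_swap]

lemma pok : ∀ (m : Pos) {c : Cell}, c ≠ Cell.e → okFrom c m →
    ∃ k, m = altF (swapCell c) k ∨ m = altF (swapCell c) k ++ [prevL c k]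
  | [], c, _, _ => ⟨0, Or.inl (altF_zero _).symm⟩
  | d :: rest, c, hc, ⟨h1, h2⟩ => by
    rcases eq_or_ne rest [] with rfl | hrest
    · have hd : d ≠ Cell.e := by simpa using h1
      by_cases hds : d = swapCell c
      · exact ⟨1, Or.inl (by rw [altF_succ (swap_ne_e hc), altF_zero, hds])⟩
      · have hdc : d = c := by
          cases c <;> cases d <;> simp_all [swapCell]
        exact ⟨0, Or.inr (by rw [altF_zero]; simp [prevL, hdc])⟩
    · rw [if_neg hrest] at h1
      subst h1
      obtain ⟨k, hk | hk⟩ := pok rest (swap_ne_e hc) h2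
      · exact ⟨k+1, Or.inl (by rw [altF_succ (swap_ne_e hc), hk])⟩
      · refine ⟨k+1, Or.inr ?_⟩
        rw [altF_succ (swap_ne_e hc), hk, ← prevL_swap]
        simp

lemma prevL_o (k : Nat) : prevL Cell.o k = lastChar (k+1) := by
  simp [prevL, lastChar, swapCell]

lemma swap_prevL_x (k : Nat) : swapCell (prevL Cell.x k) = prevL Cell.o k := by
  by_cases h : k % 2 = 0 <;> simp [prevL, h, swapCell]

lemma build_InU {a : Cell} (ha : a ≠ Cell.e) (lead : Bool) (k : Nat) (topt : Bool) :
    InU ((if lead then [a] else []) ++ (a :: altF (swapCell a) k) ++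
      (if topt then [prevL a k] else [])) := by
  cases a
  case e => exact absurd rfl ha
  case o =>
    left
    refine ⟨k+1, by omega, lead, topt, ?_⟩
    rw [altStr_succ, prevL_o]
    simp [altF, swapCell]
  case x =>
    right
    refine ⟨k+1, by omega, lead, topt, ?_⟩
    rw [altStr_succ, ← prevL_o, ← swap_prevL_x]
    cases lead <;> cases topt <;>
      simp [altF, swapCell, Function.comp_def, swap_swap]

lemma nice_InU {w : Pos} (h : nice w) : InU w := by
  rcases w with _ | ⟨a, l⟩
  · exact h.elim
  · obtain ⟨ha, hd⟩ := h
    rcases hd with ⟨hh, hok⟩ | hok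
    · rcases l with _ | ⟨b, t⟩
      · simp at hh
      · have hba : b = a := by simpa using hh
        subst hba
        simp only [List.tail_cons] at hok
        obtain ⟨k, hk | hk⟩ := pok t ha hok
        · have := build_InU ha true k false
          simpa [hk] using this
        · have := build_InU ha true k true
          simpa [hk] using this
    · obtain ⟨k, hk | hk⟩ := pok l ha hok
      · have := build_InU ha false k false
        simpa [hk] using this
      · have := build_InU ha false k true
        simpa [hk] using this

lemma nice_ne_e {w : Pos} (h : nice w) : ∀ c ∈ w, c ≠ Cell.e := by
  rcases w with _ | ⟨a, l⟩
  · simp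
  · obtain ⟨ha, hd⟩ := h
    intro c hc
    rcases List.mem_cons.1 hc with rfl | hc'
    · exact ha
    · rcases hd with ⟨hh, hok⟩ | hok
      · rcases l with _ | ⟨b, t⟩
        · simp at hc'
        · have hba : b = a := by simpa using hh
          subst hba
          simp only [List.tail_cons] at hok
          rcases List.mem_cons.1 hc' with rfl | hc''
          · exact ha
          · exact okFrom_ne_e t ha hok c hc''
      · exact okFrom_ne_e l ha hok c hc'

lemma nice_ne_nil {w : Pos} (h : nice w) : w ≠ [] := by
  rintro rfl; exact h.elim

lemma splitOn_append_e : ∀ (A B : Pos),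
    (A ++ Cell.e :: B).splitOn Cell.e = A.splitOn Cell.e ++ B.splitOn Cell.e
  | [], B => by
    simp [List.splitOn, List.splitOnP_nil, List.splitOnP_cons]
  | a :: A', B => by
    simp only [List.cons_append, List.splitOn, List.splitOnP_cons]
    by_cases ha : a = Cell.e
    · simp only [ha, beq_self_eq_true, if_pos]
      have := splitOn_append_e A' B
      simp only [List.splitOn] at this
      simp [this]
    · rw [if_neg (by simpa using ha), if_neg (by simpa using ha)]
      have := splitOn_append_e A' B
      simp only [List.splitOn] at this
      rw [this]
      rcases hA : A'.splitOnP (· == Cell.e) with _ | ⟨x, xs⟩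
      · exact absurd hA (List.splitOnP_ne_nil _ A')
      · simp [List.modifyHead]

lemma splitOn_efree {u : Pos} (h : ∀ c ∈ u, c ≠ Cell.e) : u.splitOn Cell.e = [u] := by
  apply List.splitOnP_eq_single
  intro x hx
  simpa using h x hx

lemma parts_nil : parts [] = [] := by
  simp [parts, List.splitOn, List.splitOnP_nil]

lemma parts_append_e (A B : Pos) : parts (A ++ Cell.e :: B) = parts A ++ parts B := by
  simp [parts, splitOn_append_e, List.filter_append]

lemma parts_efree {u : Pos} (h : ∀ c ∈ u, c ≠ Cell.e) (hu : u ≠ []) : parts u = [u] := by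
  simp [parts, splitOn_efree h, hu]

/-- Every part of the position is in the family (via the `nice` characterization). -/
def GoodN (p : Pos) : Prop := ∀ q ∈ parts p, nice q

lemma goodN_append_e {X Y : Pos} : GoodN (X ++ Cell.e :: Y) ↔ GoodN X ∧ GoodN Y := by
  simp [GoodN, parts_append_e, List.mem_append, or_imp, forall_and]

lemma goodN_efree {u : Pos} (h : ∀ c ∈ u, c ≠ Cell.e) : GoodN u ↔ (u ≠ [] → nice u) := by
  rcases eq_or_ne u [] with rfl | hu
  · simp [GoodN, parts_nil]
  · simp [GoodN, parts_efree h hu, hu]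

lemma movesAux_decomp {me opp : Cell} : ∀ {p q : Pos}, q ∈ movesAux me opp p →
    ∃ A B, (p = A ++ me :: opp :: B ∧ q = A ++ Cell.e :: me :: B) ∨
           (p = A ++ opp :: me :: B ∧ q = A ++ me :: Cell.e :: B)
  | [], q, hq => by simp [movesAux] at hq
  | [a], q, hq => by simp [movesAux] at hq
  | a :: b :: rest, q, hq => by
    rw [movesAux] at hq
    simp only [List.mem_append, List.mem_map] at hq
    rcases hq with (hq | hq) | ⟨q', hq', rfl⟩
    · rw [List.mem_ite_nil_right] at hq
      obtain ⟨⟨rfl, rfl⟩, hq2⟩ := hq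
      rw [List.mem_singleton] at hq2
      subst hq2
      exact ⟨[], rest, Or.inl ⟨rfl, rfl⟩⟩
    · rw [List.mem_ite_nil_right] at hq
      obtain ⟨⟨rfl, rfl⟩, hq2⟩ := hq
      rw [List.mem_singleton] at hq2
      subst hq2
      exact ⟨[], rest, Or.inr ⟨rfl, rfl⟩⟩
    · obtain ⟨A, B, ⟨h1, h2⟩ | ⟨h1, h2⟩⟩ := movesAux_decomp hq'
      · exact ⟨a :: A, B, Or.inl ⟨by rw [List.cons_append, ← h1], by rw [List.cons_append, ← h2]⟩⟩
      · exact ⟨a :: A, B, Or.inr ⟨by rw [List.cons_append, ← h1], by rw [List.cons_append, ← h2]⟩⟩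

lemma efree_decompL (B : Pos) : (∀ c ∈ B, c ≠ Cell.e) ∨
    ∃ B1 B2, B = B1 ++ Cell.e :: B2 ∧ ∀ c ∈ B1, c ≠ Cell.e := by
  induction B with
  | nil => exact Or.inl (by simp)
  | cons b B' ih =>
    by_cases hb : b = Cell.e
    · exact Or.inr ⟨[], B', by simp [hb]⟩
    · rcases ih with h | ⟨B1, B2, rfl, hB1⟩
      · exact Or.inl (by simpa [hb] using h)
      · exact Or.inr ⟨b :: B1, B2, by simp, by simpa [hb] using hB1⟩

lemma efree_decompR (A : Pos) : (∀ c ∈ A, c ≠ Cell.e) ∨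
    ∃ A1 A2, A = A1 ++ Cell.e :: A2 ∧ ∀ c ∈ A2, c ≠ Cell.e := by
  induction A with
  | nil => exact Or.inl (by simp)
  | cons a A' ih =>
    rcases ih with h | ⟨A1, A2, rfl, hA2⟩
    · by_cases ha : a = Cell.e
      · exact Or.inr ⟨[], A', by simp [ha], h⟩
      · exact Or.inl (by simpa [ha] using h)
    · exact Or.inr ⟨a :: A1, A2, by simp, hA2⟩

lemma coreParts {A B : Pos} {c d : Cell} (hA : ∀ x ∈ A, x ≠ Cell.e) (hB : ∀ x ∈ B, x ≠ Cell.e)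
    (h : nice (A ++ c :: d :: B)) (hcd : c ≠ d) :
    GoodN (A ++ Cell.e :: c :: B) ∧ GoodN (A ++ d :: Cell.e :: B) := by
  obtain ⟨hnA, hnAb, hnav, hnB⟩ := nice_closure h hcd
  have hc : c ≠ Cell.e := nice_ne_e hnav c (by simp)
  have hd : d ≠ Cell.e := nice_ne_e hnAb d (by simp)
  constructor
  · rw [goodN_append_e]
    refine ⟨(goodN_efree hA).2 hnA, (goodN_efree ?_).2 (fun _ => hnav)⟩
    intro x hx
    rcases List.mem_cons.1 hx with rfl | hx'
    · exact hc
    · exact hB x hx'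
  · have : A ++ d :: Cell.e :: B = (A ++ [d]) ++ Cell.e :: B := by simp
    rw [this, goodN_append_e]
    refine ⟨(goodN_efree ?_).2 (fun _ => hnAb), (goodN_efree hB).2 hnB⟩
    intro x hx
    rcases List.mem_append.1 hx with hx' | hx'
    · exact hA x hx'
    · simpa using (by simpa using hx') ▸ hd

lemma stepGoodAux {A B : Pos} {c d : Cell} (hg : GoodN (A ++ c :: d :: B)) (hcd : c ≠ d)
    (hc : c ≠ Cell.e) (hd : d ≠ Cell.e) :
    GoodN (A ++ Cell.e :: c :: B) ∧ GoodN (A ++ d :: Cell.e :: B) := by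
  rcases efree_decompR A with hA | ⟨A1, A2, rfl, hA2⟩ <;>
    rcases efree_decompL B with hB | ⟨B1, B2, rfl, hB1⟩
  · -- both e-free
    have hfree : ∀ x ∈ A ++ c :: d :: B, x ≠ Cell.e := by
      intro x hx
      rcases List.mem_append.1 hx with h | h
      · exact hA x h
      · rcases List.mem_cons.1 h with rfl | h
        · exact hc
        · rcases List.mem_cons.1 h with rfl | h
          · exact hd
          · exact hB x h
    have hn : nice (A ++ c :: d :: B) :=
      ((goodN_efree hfree).1 hg) (by simp)
    exact coreParts hA hB hn hcd
  · -- B = B1 ++ e :: B2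
    have e1 : A ++ c :: d :: (B1 ++ Cell.e :: B2) = (A ++ c :: d :: B1) ++ Cell.e :: B2 := by simp
    have e2 : A ++ Cell.e :: c :: (B1 ++ Cell.e :: B2) = (A ++ Cell.e :: c :: B1) ++ Cell.e :: B2 := by
      simp
    have e3 : A ++ d :: Cell.e :: (B1 ++ Cell.e :: B2) = (A ++ d :: Cell.e :: B1) ++ Cell.e :: B2 := by
      simp
    rw [e1, goodN_append_e] at hg
    have hfree : ∀ x ∈ A ++ c :: d :: B1, x ≠ Cell.e := by
      intro x hx
      rcases List.mem_append.1 hx with h | h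
      · exact hA x h
      · rcases List.mem_cons.1 h with rfl | h
        · exact hc
        · rcases List.mem_cons.1 h with rfl | h
          · exact hd
          · exact hB1 x h
    have hn : nice (A ++ c :: d :: B1) := ((goodN_efree hfree).1 hg.1) (by simp)
    obtain ⟨g1, g2⟩ := coreParts hA hB1 hn hcd
    exact ⟨by rw [e2, goodN_append_e]; exact ⟨g1, hg.2⟩,
           by rw [e3, goodN_append_e]; exact ⟨g2, hg.2⟩⟩
  · -- A = A1 ++ e :: A2
    have e1 : (A1 ++ Cell.e :: A2) ++ c :: d :: B = A1 ++ Cell.e :: (A2 ++ c :: d :: B) := by simp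
    have e2 : (A1 ++ Cell.e :: A2) ++ Cell.e :: c :: B = A1 ++ Cell.e :: (A2 ++ Cell.e :: c :: B) := by
      simp
    have e3 : (A1 ++ Cell.e :: A2) ++ d :: Cell.e :: B = A1 ++ Cell.e :: (A2 ++ d :: Cell.e :: B) := by
      simp
    rw [e1, goodN_append_e] at hg
    have hfree : ∀ x ∈ A2 ++ c :: d :: B, x ≠ Cell.e := by
      intro x hx
      rcases List.mem_append.1 hx with h | h
      · exact hA2 x h
      · rcases List.mem_cons.1 h with rfl | h
        · exact hc
        · rcases List.mem_cons.1 h with rfl | h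
          · exact hd
          · exact hB x h
    have hn : nice (A2 ++ c :: d :: B) := ((goodN_efree hfree).1 hg.2) (by simp)
    obtain ⟨g1, g2⟩ := coreParts hA2 hB hn hcd
    exact ⟨by rw [e2, goodN_append_e]; exact ⟨hg.1, g1⟩,
           by rw [e3, goodN_append_e]; exact ⟨hg.1, g2⟩⟩
  · -- both decomposed
    have e1 : (A1 ++ Cell.e :: A2) ++ c :: d :: (B1 ++ Cell.e :: B2)
        = A1 ++ Cell.e :: ((A2 ++ c :: d :: B1) ++ Cell.e :: B2) := by simp
    have e2 : (A1 ++ Cell.e :: A2) ++ Cell.e :: c :: (B1 ++ Cell.e :: B2)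
        = A1 ++ Cell.e :: ((A2 ++ Cell.e :: c :: B1) ++ Cell.e :: B2) := by simp
    have e3 : (A1 ++ Cell.e :: A2) ++ d :: Cell.e :: (B1 ++ Cell.e :: B2)
        = A1 ++ Cell.e :: ((A2 ++ d :: Cell.e :: B1) ++ Cell.e :: B2) := by simp
    rw [e1, goodN_append_e, goodN_append_e] at hg
    have hfree : ∀ x ∈ A2 ++ c :: d :: B1, x ≠ Cell.e := by
      intro x hx
      rcases List.mem_append.1 hx with h | h
      · exact hA2 x h
      · rcases List.mem_cons.1 h with rfl | h
        · exact hc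
        · rcases List.mem_cons.1 h with rfl | h
          · exact hd
          · exact hB1 x h
    have hn : nice (A2 ++ c :: d :: B1) := ((goodN_efree hfree).1 hg.2.1) (by simp)
    obtain ⟨g1, g2⟩ := coreParts hA2 hB1 hn hcd
    exact ⟨by rw [e2, goodN_append_e, goodN_append_e]; exact ⟨hg.1, g1, hg.2.2⟩,
           by rw [e3, goodN_append_e, goodN_append_e]; exact ⟨hg.1, g2, hg.2.2⟩⟩

lemma stepGood {p p' : Pos} (hg : GoodN p) (hs : Step p p') : GoodN p' := by
  rcases hs with hs | hs
  all_goals obtain ⟨A, B, ⟨rfl, rfl⟩ | ⟨rfl, rfl⟩⟩ := movesAux_decomp hs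
  · exact (stepGoodAux hg (by simp) (by simp) (by simp)).1
  · exact (stepGoodAux hg (by simp) (by simp) (by simp)).2
  · exact (stepGoodAux hg (by simp) (by simp) (by simp)).1
  · exact (stepGoodAux hg (by simp) (by simp) (by simp)).2

lemma altOX_eq (n : Nat) : altOX n = altStr (2*n) := by
  induction n with
  | zero => simp [altOX, altStr]
  | succ n ih =>
    have h2 : 2*(n+1) = (2*n+1)+1 := by omega
    rw [altOX, h2, altStr_succ, altStr_succ, List.map_cons, map_swap_map_swap, ih]
    rfl

end Aux

/-- Every part arising in a clobber game started from an even-length alternating path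
is in the family `U`, and `U` is closed under clobber moves: any move on a part in
`U` leaves only parts in `U`. -/
theorem parts_in_U_and_closed :
    (∀ n p, Reachable (altOX n) p → ∀ q ∈ parts p, InU q) ∧
    (∀ w, InU w → ∀ w' , Step w w' → ∀ q ∈ parts w', InU q) := by
  have base : ∀ n, GoodN (altOX n) := by
    intro n
    rw [altOX_eq]
    rcases Nat.eq_zero_or_pos n with rfl | hn
    · intro q hq
      rw [show altStr (2*0) = [] from rfl, parts_nil] at hq
      exact absurd hq List.not_mem_nil
    · have hnice : nice (altStr (2*n)) := InU0_nice ⟨2*n, by omega, false, false, by simp⟩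
      exact (goodN_efree altStr_ne_e).2 (fun _ => hnice)
  constructor
  · intro n p hreach
    have hg : GoodN p := by
      induction hreach with
      | refl => exact base n
      | tail _ hst ih => exact stepGood ih hst
    intro q hq
    exact nice_InU (hg q hq)
  · intro w hw w' hstep q hq
    have hn := InU_nice hw
    have hg : GoodN w := (goodN_efree (nice_ne_e hn)).2 (fun _ => hn)
    exact nice_InU (stepGood hg hstep q hq)
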